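/- Let V be a finite-dimensional vector space over an algebraically closed field k of characteristic p, and let φ : V → V be a p^k-semilinear map (φ(λx) = λ^{p^k} φ(x), additive). Decompose V = V_ss ⊕ V_nil where φ is bijective on V_ss and nilpotent on V_nil. Then φ − id is surjective on V, and ker(φ − id) is an F_{p^k}-vector space of dimension equal to dim_k V_ss. -/

import Mathlib

open Polynomial Finset Module

section LangAux

variable {k : Type*} [Field k] [IsAlgClosed k] {p : ℕ} [Fact p.Prime] [CharP k p]

variable {k : Type*} [Field k] [IsAlgClosed k] {p : ℕ} [Fact p.Prime] [CharP k p]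

lemma lang_q_zero (r : ℕ) (hr : 0 < r) : ((p ^ r : ℕ) : k) = 0 := by
  push_cast [CharP.cast_eq_zero k p]; exact zero_pow hr.ne'

lemma lang_root (r : ℕ) (hr : 0 < r) (e : k) : ∃ a : k, a ^ p ^ r - a + e = 0 := by
  have hq : 2 ≤ p ^ r := (Nat.one_lt_pow hr.ne' (Fact.out : p.Prime).one_lt)
  set f : k[X] := X ^ (p ^ r) - (X - C e) with hf
  have hdeg : f.degree = (p ^ r : ℕ) := by
    have h1 : (X - C e : k[X]).degree < (X ^ (p ^ r) : k[X]).degree := by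
      rw [degree_X_pow]
      calc (X - C e).degree ≤ 1 := degree_X_sub_C_le e
      _ < ((p ^ r : ℕ) : WithBot ℕ) := by exact_mod_cast Nat.one_lt_cast.mpr hq
    have := degree_sub_eq_left_of_degree_lt h1
    rwa [degree_X_pow] at this
  obtain ⟨a, ha⟩ := IsAlgClosed.exists_root f (by rw [hdeg]; norm_cast; omega)
  refine ⟨a, ?_⟩
  have := ha
  rw [IsRoot, hf] at this
  simp at this
  linear_combination this

lemma lang_card_fixed (r : ℕ) (hr : 0 < r) : Nat.card {a : k // a ^ p ^ r = a} = p ^ r := by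
  have hq : 2 ≤ p ^ r := (Nat.one_lt_pow hr.ne' (Fact.out : p.Prime).one_lt)
  set f : k[X] := X ^ (p ^ r) - X with hf
  have hdeg : f.degree = (p ^ r : ℕ) := by
    have h1 : (X : k[X]).degree < (X ^ (p ^ r) : k[X]).degree := by
      rw [degree_X_pow, degree_X]
      exact_mod_cast Nat.one_lt_cast.mpr hq
    have := degree_sub_eq_left_of_degree_lt h1
    rwa [degree_X_pow] at this
  have hne : f ≠ 0 := fun h => by rw [h, degree_zero] at hdeg; exact WithBot.bot_ne_coe hdeg
  have hsep : f.Separable := by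
    have hd : derivative f = -1 := by
      rw [hf, derivative_sub, derivative_X_pow, derivative_X, lang_q_zero r hr]
      simp
    unfold Polynomial.Separable
    rw [hd]
    exact (isCoprime_one_right).neg_right
  have hcard : Fintype.card (f.rootSet k) = f.natDegree := by
    apply card_rootSet_eq_natDegree hsep
    exact IsAlgClosed.splits_domain f
  have hnd : f.natDegree = p ^ r := natDegree_eq_of_degree_eq_some hdeg
  have he : {a : k // a ^ p ^ r = a} ≃ f.rootSet k := by
    apply Equiv.subtypeEquivRight
    intro a
    rw [mem_rootSet]
    simp [hf, sub_eq_zero, hne]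
    exact fun _ h => hne (by rw [hf, h, sub_self])
  rw [Nat.card_congr he, Nat.card_eq_fintype_card, hcard, hnd]


set_option maxHeartbeats 1000000 in
lemma lang_exists_fixed (r : ℕ) (hr : 0 < r) (W : Type*) [AddCommGroup W] [Module k W]
    [FiniteDimensional k W] (hW : 0 < Module.finrank k W)
    (ψ : W →ₛₗ[iterateFrobenius k p r] W) (hψ : Function.Bijective ψ) :
    ∃ v : W, v ≠ 0 ∧ ψ v = v := by
  classical
  obtain ⟨q, hq, hqd⟩ : ∃ q, 2 ≤ q ∧ p ^ r = q :=
    ⟨p ^ r, Nat.one_lt_pow hr.ne' (Fact.out : p.Prime).one_lt, rfl⟩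
  have hσ : ∀ x : k, iterateFrobenius k p r x = x ^ q := by
    intro x; rw [← hqd]; exact iterateFrobenius_def p r x
  have hfrobsum : ∀ (s : Finset ℕ) (g : ℕ → k), (∑ j ∈ s, g j) ^ q = ∑ j ∈ s, g j ^ q := by
    intro s g
    have := map_sum (iterateFrobenius k p r) g s
    simp only [iterateFrobenius_def, hqd] at this
    exact this
  have : Nontrivial W := Module.nontrivial_of_finrank_pos hW
  obtain ⟨u, hu⟩ := exists_ne (0 : W)
  set w : ℕ → W := fun i => (⇑ψ)^[i] u with hwdef
  have hws : ∀ i, w (i + 1) = ψ (w i) := fun i => Function.iterate_succ_apply' _ _ _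
  have hwne : ∀ i, w i ≠ 0 := by
    intro i
    induction i with
    | zero => exact hu
    | succ j ih =>
      rw [hws]; intro h; exact ih (hψ.injective (by rw [h, map_zero]))
  have hdep : ∃ m, ¬ LinearIndependent k (fun i : Fin (m+1) => w i) := by
    refine ⟨finrank k W, fun hind => ?_⟩
    have := hind.fintype_card_le_finrank
    simp at this
  have hmspec := Nat.find_spec hdep
  have hm1 : 1 ≤ Nat.find hdep := by
    rcases Nat.eq_zero_or_pos (Nat.find hdep) with h0 | h
    · exfalso; apply hmspec; rw [h0]
      haveI : Unique (Fin (0 + 1)) := inferInstanceAs (Unique (Fin 1))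
      exact linearIndependent_unique_iff.mpr (by simpa using hwne 0)
    · exact h
  obtain ⟨n, hn⟩ : ∃ n, Nat.find hdep = n + 1 := ⟨Nat.find hdep - 1, by omega⟩
  rw [hn] at hmspec
  have hind : LinearIndependent k (fun i : Fin (n+1) => w i) :=
    not_not.mp (Nat.find_min hdep (by omega))
  have hgs : (fun i : Fin (n+1+1) => w i) =
      Fin.snoc (fun i : Fin (n+1) => w i) (w (n+1)) := by
    funext i
    refine Fin.lastCases ?_ ?_ i
    · simp [Fin.snoc_last]
    · intro j; simp [Fin.snoc_castSucc]
  rw [hgs, linearIndependent_fin_snoc] at hmspec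
  have hspan : w (n+1) ∈ Submodule.span k (Set.range fun i : Fin (n+1) => w ↑i) := by
    by_contra hns
    exact hmspec ⟨hind, hns⟩
  rw [Submodule.mem_span_range_iff_exists_fun] at hspan
  obtain ⟨c, hc⟩ := hspan
  have hcc' : ∃ cc : ℕ → k, ∀ i : Fin (n+1), cc ↑i = c i :=
    ⟨fun j => if h : j < n+1 then c ⟨j, h⟩ else 0, fun i => by simp [i.isLt]⟩
  obtain ⟨cc, hccval⟩ := hcc'
  have hsum : ∑ j ∈ range (n+1), cc j • w j = w (n+1) := by
    rw [Finset.sum_range, ← hc]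
    exact Fintype.sum_congr _ _ fun i => by rw [hccval]
  have hcc : ∃ i, i < n+1 ∧ cc i ≠ 0 := by
    by_contra hall
    push_neg at hall
    apply hwne (n+1)
    rw [← hsum]
    refine Finset.sum_eq_zero fun j hj => ?_
    rw [hall j (Finset.mem_range.mp hj), zero_smul]
  obtain ⟨i₀, hi₀lt, hi₀⟩ := hcc
  -- the polynomial
  set b : ℕ → k := fun i => cc i ^ q ^ (n - i) with hbdef
  set h : k[X] := (∑ i ∈ range (n+1), C (b i) * X ^ (q ^ (n+1-i) - 1)) - 1 with hhdef
  have hexp1 : ∀ i, i < n+1 → 1 ≤ q ^ (n+1-i) - 1 := by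
    intro i hi
    have : q ≤ q ^ (n+1-i) := le_self_pow₀ (by omega) (by omega)
    omega
  have heval0 : h.eval 0 = -1 := by
    rw [hhdef, eval_sub, eval_finset_sum, eval_one, Finset.sum_eq_zero, zero_sub]
    intro i hi
    rw [eval_mul, eval_C, eval_pow, eval_X,
      zero_pow (by have := hexp1 i (Finset.mem_range.mp hi); omega), mul_zero]
  have hb₀ : b i₀ ≠ 0 := pow_ne_zero _ hi₀
  have hcoeff : h.coeff (q ^ (n+1-i₀) - 1) = b i₀ := by
    rw [hhdef, coeff_sub, finset_sum_coeff]
    rw [Finset.sum_eq_single i₀]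
    · rw [coeff_C_mul, coeff_X_pow, if_pos rfl, mul_one, coeff_one,
        if_neg (by have := hexp1 i₀ hi₀lt; omega), sub_zero]
    · intro i hi hne
      rw [coeff_C_mul, coeff_X_pow, if_neg, mul_zero]
      intro heq
      apply hne
      have hilt := Finset.mem_range.mp hi
      have e1 := hexp1 i hilt
      have e2 := hexp1 i₀ hi₀lt
      have h1 : q ^ (n+1-i) = q ^ (n+1-i₀) := by omega
      have := Nat.pow_right_injective hq h1
      omega
    · intro hni
      exact absurd (Finset.mem_range.mpr hi₀lt) hni
  have hhne : h ≠ 0 := fun h0 => by rw [h0, coeff_zero] at hcoeff; exact hb₀ hcoeff.symm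
  have hhdeg : h.degree ≠ 0 := by
    intro h0
    have hnd : h.natDegree = 0 := natDegree_eq_zero_iff_degree_le_zero.mpr (le_of_eq h0)
    have := le_natDegree_of_ne_zero (hcoeff ▸ hb₀)
    have := hexp1 i₀ hi₀lt
    omega
  obtain ⟨t, ht⟩ := IsAlgClosed.exists_root h hhdeg
  have ht0 : t ≠ 0 := by
    intro h0
    rw [IsRoot, h0, heval0] at ht
    exact (by norm_num : (-1 : k) ≠ 0) ht
  have heq1 : ∑ i ∈ range (n+1), b i * t ^ (q ^ (n+1-i) - 1) = 1 := by
    have h2 := ht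
    rw [IsRoot, hhdef, eval_sub, eval_finset_sum, eval_one, sub_eq_zero] at h2
    rw [← h2]
    refine Finset.sum_congr rfl fun i hi => ?_
    rw [eval_mul, eval_C, eval_pow, eval_X]
  have hP : ∑ i ∈ range (n+1), b i * t ^ q ^ (n+1-i) = t := by
    have h3 : ∑ i ∈ range (n+1), b i * t ^ q ^ (n+1-i)
        = t * ∑ i ∈ range (n+1), b i * t ^ (q ^ (n+1-i) - 1) := by
      rw [Finset.mul_sum]
      refine Finset.sum_congr rfl fun i hi => ?_
      have e1 := hexp1 i (Finset.mem_range.mp hi)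
      calc b i * t ^ q ^ (n+1-i) = b i * t ^ ((q ^ (n+1-i) - 1) + 1) := by
            congr 2; omega
      _ = t * (b i * t ^ (q ^ (n+1-i) - 1)) := by rw [pow_succ]; ring
    rw [h3, heq1, mul_one]
  -- the coefficients
  set a : ℕ → k := fun i => ∑ j ∈ range (i+1), cc j ^ q ^ (i - j) * t ^ q ^ (i - j + 1)
    with hadef
  have haval : ∀ i, a i = ∑ j ∈ range (i+1), cc j ^ q ^ (i - j) * t ^ q ^ (i - j + 1) :=
    fun i => rfl
  have ha0 : a 0 = cc 0 * t ^ q := by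
    rw [haval, Finset.sum_range_one]
    norm_num
  have hastep : ∀ i, a (i+1) = a i ^ q + cc (i+1) * t ^ q := by
    intro i
    rw [haval, haval, Finset.sum_range_succ, hfrobsum]
    congr 1
    · refine Finset.sum_congr rfl fun j hj => ?_
      have hjle : j ≤ i := by have := Finset.mem_range.mp hj; omega
      have e1 : i + 1 - j = (i - j) + 1 := by omega
      rw [e1, mul_pow, ← pow_mul, ← pow_mul, ← pow_succ, ← pow_succ]
    · simp
  have ham : a n = t := by
    rw [haval]
    have hh2 : ∑ j ∈ range (n+1), cc j ^ q ^ (n - j) * t ^ q ^ (n - j + 1)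
        = ∑ i ∈ range (n+1), b i * t ^ q ^ (n+1-i) := by
      refine Finset.sum_congr rfl fun j hj => ?_
      simp only [hbdef]
      have hjle := Finset.mem_range.mp hj
      have e1 : n - j + 1 = n + 1 - j := by omega
      rw [e1]
    rw [hh2, hP]
  -- the fixed vector
  refine ⟨∑ i ∈ range (n+1), a i • w i, ?_, ?_⟩
  · intro hv0
    rw [Finset.sum_range] at hv0
    have := Fintype.linearIndependent_iff.mp hind (fun i => a ↑i) hv0 ⟨n, by omega⟩
    rw [ham] at this
    exact ht0 this
  · have hψsum : ψ (∑ i ∈ range (n+1), a i • w i) = ∑ i ∈ range (n+1), (a i ^ q) • w (i+1) := by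
      rw [map_sum]
      refine Finset.sum_congr rfl fun i hi => ?_
      rw [LinearMap.map_smulₛₗ, hσ, hws]
    rw [hψsum]
    rw [Finset.sum_range_succ, ham, ← hsum, Finset.smul_sum]
    rw [Finset.sum_range_succ' (fun i => a i • w i) n]
    have hterm : ∀ j, t ^ q • (cc j • w j) = (cc j * t ^ q) • w j := by
      intro j
      rw [smul_smul, mul_comm]
    have hsplit : ∀ i, a (i+1) • w (i+1) = (a i ^ q) • w (i+1) + (cc (i+1) * t ^ q) • w (i+1) := by
      intro i
      rw [hastep, add_smul]
    calc ∑ i ∈ range n, (a i ^ q) • w (i+1) + ∑ j ∈ range (n+1), t ^ q • (cc j • w j)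
        = ∑ i ∈ range n, (a i ^ q) • w (i+1)
          + (∑ j ∈ range n, (cc (j+1) * t ^ q) • w (j+1) + (cc 0 * t ^ q) • w 0) := by
          congr 1
          rw [Finset.sum_range_succ' (fun j => t ^ q • (cc j • w j)) n]
          congr 1
          · exact Finset.sum_congr rfl fun j _ => hterm (j+1)
          · exact hterm 0
      _ = ∑ i ∈ range n, ((a i ^ q) • w (i+1) + (cc (i+1) * t ^ q) • w (i+1))
          + (cc 0 * t ^ q) • w 0 := by
          rw [Finset.sum_add_distrib]; abel
      _ = ∑ i ∈ range n, a (i+1) • w (i+1) + a 0 • w 0 := by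
          rw [ha0]
          congr 1
          exact Finset.sum_congr rfl fun i _ => (hsplit i).symm

set_option maxHeartbeats 1000000 in
lemma lang_main (r : ℕ) (hr : 0 < r) :
    ∀ (n : ℕ) (W : Type*) [AddCommGroup W] [Module k W] [FiniteDimensional k W],
      Module.finrank k W = n →
      ∀ ψ : W →ₛₗ[iterateFrobenius k p r] W, Function.Bijective ψ →
        (∀ y : W, ∃ x : W, ψ x - x = y) ∧
        Nat.card {x : W // ψ x = x} = (p ^ r) ^ n := by
  intro n
  induction n using Nat.strong_induction_on with
  | _ n IH =>
    intro W _ _ _ hrank ψ hψ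
    rcases Nat.eq_zero_or_pos n with h0 | hpos
    · subst h0
      haveI : Subsingleton W := Module.finrank_zero_iff.mp hrank
      constructor
      · intro y; exact ⟨0, Subsingleton.elim _ _⟩
      · rw [pow_zero]
        haveI : Unique {x : W // ψ x = x} :=
          ⟨⟨⟨0, by rw [map_zero]⟩⟩, fun a => Subtype.ext (Subsingleton.elim _ _)⟩
        exact Nat.card_unique
    · obtain ⟨v, hv0, hvfix⟩ := lang_exists_fixed r hr W (hrank ▸ hpos) ψ hψ
      set L : Submodule k W := k ∙ v with hLdef
      have hvL : v ∈ L := Submodule.mem_span_singleton_self v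
      have hψL : L ≤ Submodule.comap ψ L := by
        intro x hx
        rw [hLdef, Submodule.mem_span_singleton] at hx
        obtain ⟨a, rfl⟩ := hx
        rw [Submodule.mem_comap, map_smulₛₗ, hvfix]
        exact Submodule.smul_mem _ _ hvL
      set ψQ : (W ⧸ L) →ₛₗ[iterateFrobenius k p r] (W ⧸ L) := Submodule.mapQ L L ψ hψL
        with hψQdef
      have hψQmk : ∀ x : W, ψQ (Submodule.Quotient.mk x) = Submodule.Quotient.mk (ψ x) :=
        fun x => rfl
      have hrankL : finrank k L = 1 := finrank_span_singleton hv0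
      have hrankQ : finrank k (W ⧸ L) = n - 1 := by
        have := Submodule.finrank_quotient_add_finrank L
        omega
      have hψQsurj : Function.Surjective ψQ := by
        intro y
        obtain ⟨x, rfl⟩ := Submodule.Quotient.mk_surjective L y
        obtain ⟨z, hz⟩ := hψ.surjective x
        exact ⟨Submodule.Quotient.mk z, by rw [hψQmk, hz]⟩
      have hψQinj : Function.Injective ψQ := by
        rw [injective_iff_map_eq_zero]
        intro y hy
        obtain ⟨x, rfl⟩ := Submodule.Quotient.mk_surjective L y
        rw [hψQmk, Submodule.Quotient.mk_eq_zero] at hy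
        rw [hLdef, Submodule.mem_span_singleton] at hy
        obtain ⟨a, ha⟩ := hy
        obtain ⟨b, hb⟩ : ∃ b : k, iterateFrobenius k p r b = a :=
          ⟨(iterateFrobeniusEquiv k p r).symm a, (iterateFrobeniusEquiv k p r).apply_symm_apply a⟩
        have hxb : ψ x = ψ (b • v) := by
          rw [map_smulₛₗ, hvfix, hb, ha]
        rw [Submodule.Quotient.mk_eq_zero, hψ.injective hxb, hLdef]
        exact Submodule.smul_mem _ _ hvL
      obtain ⟨hsurjQ, hcardQ⟩ := IH (n - 1) (by omega) (W ⧸ L) hrankQ ψQ ⟨hψQinj, hψQsurj⟩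
      -- membership helper
      have hmemL : ∀ x : W, (Submodule.Quotient.mk x : W ⧸ L) = 0 → ∃ a : k, a • v = x := by
        intro x hx
        rw [Submodule.Quotient.mk_eq_zero, hLdef, Submodule.mem_span_singleton] at hx
        exact hx
      have hfrobval : ∀ s : k, iterateFrobenius k p r s = s ^ p ^ r := fun s =>
        iterateFrobenius_def p r s
      constructor
      · -- surjectivity
        intro y
        obtain ⟨xq, hxq⟩ := hsurjQ (Submodule.Quotient.mk y)
        obtain ⟨x, rfl⟩ := Submodule.Quotient.mk_surjective L xq
        have hmk : (Submodule.Quotient.mk (ψ x - x - y) : W ⧸ L) = 0 := by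
          rw [Submodule.Quotient.mk_sub, Submodule.Quotient.mk_sub, ← hψQmk, hxq, sub_self]
        obtain ⟨a, ha⟩ := hmemL _ hmk
        obtain ⟨s, hs⟩ := lang_root (p := p) r hr (-a)
        refine ⟨x - s • v, ?_⟩
        have h1 : ψ (x - s • v) = ψ x - (s ^ p ^ r) • v := by
          rw [map_sub, map_smulₛₗ, hvfix, hfrobval]
        have h2 : ψ x = x + y + a • v := by
          rw [ha]; abel
        rw [h1, h2]
        have h3 : a = s ^ p ^ r - s := by linear_combination -hs
        rw [h3, sub_smul]
        abel
      · -- cardinality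
        have hsec : ∀ z : {z : W ⧸ L // ψQ z = z}, ∃ x : W,
            ψ x = x ∧ (Submodule.Quotient.mk x : W ⧸ L) = z.1 := by
          rintro ⟨z, hz⟩
          obtain ⟨x, rfl⟩ := Submodule.Quotient.mk_surjective L z
          have hmk : (Submodule.Quotient.mk (ψ x - x) : W ⧸ L) = 0 := by
            rw [Submodule.Quotient.mk_sub, ← hψQmk, hz, sub_self]
          obtain ⟨a, ha⟩ := hmemL _ hmk
          obtain ⟨s, hs⟩ := lang_root (p := p) r hr a
          refine ⟨x + s • v, ?_, ?_⟩
          · have h1 : ψ (x + s • v) = ψ x + (s ^ p ^ r) • v := by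
              rw [map_add, map_smulₛₗ, hvfix, hfrobval]
            have h2 : ψ x = x + a • v := by
              rw [ha]; abel
            rw [h1, h2]
            have h3 : (a : k) + s ^ p ^ r = s := by linear_combination hs
            have h4 : a • v + s ^ p ^ r • v = s • v := by rw [← add_smul, h3]
            rw [add_assoc, h4]
          · have : (Submodule.Quotient.mk (s • v) : W ⧸ L) = 0 :=
              (Submodule.Quotient.mk_eq_zero L).mpr (Submodule.smul_mem _ _ hvL)
            rw [Submodule.Quotient.mk_add, this, add_zero]
        choose sec hsecfix hsecmk using hsec
        have heqv : {a : k // a ^ p ^ r = a} × {z : W ⧸ L // ψQ z = z} ≃ {x : W // ψ x = x} := by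
          refine Equiv.ofBijective
            (fun az => ⟨az.1.1 • v + sec az.2, ?_⟩) ⟨?_, ?_⟩
          · rw [map_add, map_smulₛₗ, hvfix, hfrobval, az.1.2, hsecfix]
          · rintro ⟨⟨a, ha⟩, ⟨z, hz⟩⟩ ⟨⟨a', ha'⟩, ⟨z', hz'⟩⟩ heq
            simp only [Subtype.mk.injEq] at heq
            have heq' : a • v + sec ⟨z, hz⟩ = a' • v + sec ⟨z', hz'⟩ := heq
            simp only [Prod.mk.injEq, Subtype.mk.injEq]
            have hmkv : ∀ c : k, (Submodule.Quotient.mk (c • v) : W ⧸ L) = 0 := fun c =>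
              (Submodule.Quotient.mk_eq_zero L).mpr (Submodule.smul_mem _ _ hvL)
            have hz12 : z = z' := by
              have := congrArg (fun x : W => (Submodule.Quotient.mk x : W ⧸ L)) heq'
              simp only [Submodule.Quotient.mk_add, hmkv, zero_add, hsecmk] at this
              exact this
            subst hz12
            have hsz : sec ⟨z, hz⟩ = sec ⟨z, hz'⟩ := rfl
            rw [hsz, add_left_inj] at heq'
            have : (a - a') • v = 0 := by rw [sub_smul, heq', sub_self]
            rcases smul_eq_zero.mp this with h | h
            · exact ⟨by linear_combination h, rfl⟩
            · exact absurd h hv0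
          · rintro ⟨x, hx⟩
            have hzfix : ψQ (Submodule.Quotient.mk x) = Submodule.Quotient.mk x := by
              rw [hψQmk, hx]
            set z : {z : W ⧸ L // ψQ z = z} := ⟨Submodule.Quotient.mk x, hzfix⟩ with hzdef
            have hmk : (Submodule.Quotient.mk (x - sec z) : W ⧸ L) = 0 := by
              rw [Submodule.Quotient.mk_sub, hsecmk, hzdef, sub_self]
            obtain ⟨a, ha⟩ := hmemL _ hmk
            have hafix : ψ (x - sec z) = x - sec z := by
              rw [map_sub, hx, hsecfix]
            have haq : a ^ p ^ r = a := by
              rw [← ha, map_smulₛₗ, hvfix, hfrobval] at hafix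
              have : (a ^ p ^ r - a) • v = 0 := by
                rw [sub_smul, hafix, ha, sub_self]
              rcases smul_eq_zero.mp this with h | h
              · linear_combination h
              · exact absurd h hv0
            refine ⟨⟨⟨a, haq⟩, z⟩, ?_⟩
            apply Subtype.ext
            show a • v + sec z = x
            rw [ha]
            abel
        rw [← Nat.card_congr heqv, Nat.card_prod, lang_card_fixed (p := p) (k := k) r hr, hcardQ]
        rw [← pow_succ']
        congr 1
        omega

end LangAux

/-- Lang's lemma (Milne, Étale Cohomology III §4, Lemma 4.13): let `V` be a
finite-dimensional vector space over an algebraically closed field `k` of characteristic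
`p`, and `φ : V → V` a `p^r`-semilinear map (additive, `φ(λx) = λ^{p^r} φ(x)`).  Given a
Fitting decomposition `V = V_ss ⊕ V_nil` where `φ` is bijective on `V_ss` and nilpotent
on `V_nil`, the map `φ − id` is surjective and its kernel is an `F_{p^r}`-vector space of
dimension `dim_k V_ss`, i.e. has cardinality `(p^r)^{dim_k V_ss}`. -/
theorem stmt7 (k : Type*) [Field k] [IsAlgClosed k] (p : ℕ) [Fact p.Prime] [CharP k p]
    (r : ℕ) (hr : 0 < r)
    (V : Type*) [AddCommGroup V] [Module k V] [FiniteDimensional k V]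
    (φ : V → V)
    (hadd : ∀ x y : V, φ (x + y) = φ x + φ y)
    (hsmul : ∀ (c : k) (x : V), φ (c • x) = c ^ (p ^ r) • φ x)
    (Vss Vnil : Submodule k V) (hcompl : IsCompl Vss Vnil)
    (hbij : Set.BijOn φ (Vss : Set V) (Vss : Set V))
    (hmaps : ∀ x ∈ Vnil, φ x ∈ Vnil)
    (hnil : ∃ N : ℕ, ∀ x ∈ Vnil, φ^[N] x = 0) :
    Function.Surjective (fun x : V => φ x - x) ∧
    Nat.card {x : V // φ x = x} = (p ^ r) ^ (Module.finrank k Vss) := by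
  classical
  obtain ⟨N, hN⟩ := hnil
  set Φ : V →+ V := AddMonoidHom.mk' φ hadd with hΦdef
  have hΦval : ∀ x : V, Φ x = φ x := fun _ => rfl
  let ψs : Vss →ₛₗ[iterateFrobenius k p r] Vss :=
    { toFun := fun x => ⟨φ x, hbij.mapsTo x.2⟩
      map_add' := fun x y => Subtype.ext (by simpa using hadd x y)
      map_smul' := fun c x => Subtype.ext (by
        simp only [Submodule.coe_smul, SetLike.val_smul, RingHom.id_apply]
        rw [iterateFrobenius_def]
        exact hsmul c x) }
  have hψsval : ∀ x : Vss, (ψs x : V) = φ x := fun _ => rfl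
  have hψsbij : Function.Bijective ψs := by
    constructor
    · intro x y hxy
      exact Subtype.ext (hbij.injOn x.2 y.2 (congrArg Subtype.val hxy))
    · intro y
      obtain ⟨x, hx, hxy⟩ := hbij.surjOn y.2
      exact ⟨⟨x, hx⟩, Subtype.ext hxy⟩
  obtain ⟨hsurjS, hcardS⟩ :=
    lang_main (p := p) r hr (Module.finrank k Vss) Vss rfl ψs hψsbij
  have hfixmem : ∀ x : V, φ x = x → x ∈ Vss := by
    intro x hx
    have hxmem : x ∈ Vss ⊔ Vnil := by rw [hcompl.sup_eq_top]; trivial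
    obtain ⟨s, hs, t, ht, rfl⟩ := Submodule.mem_sup.mp hxmem
    have hsum : φ s + φ t = s + t := by rw [← hadd]; exact hx
    have h1 : φ s - s = t - φ t := by
      have := hsum
      rw [← sub_eq_zero] at this ⊢
      rw [← this]; abel_nf
    have hmem1 : φ s - s ∈ Vss := sub_mem (hbij.mapsTo hs) hs
    have hmem2 : t - φ t ∈ Vnil := sub_mem ht (hmaps t ht)
    have h0 : φ s - s = 0 :=
      Submodule.disjoint_def.mp hcompl.disjoint _ hmem1 (h1 ▸ hmem2)
    have hφt : φ t = t := by
      have h2 : t - φ t = 0 := by rw [← h1, h0]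
      have := sub_eq_zero.mp h2
      exact this.symm
    have ht0 : t = 0 := by
      rw [← hN t ht]
      exact (Function.iterate_fixed hφt N).symm
    rw [ht0, add_zero]
    exact hs
  constructor
  · intro y
    have hy : y ∈ Vss ⊔ Vnil := by rw [hcompl.sup_eq_top]; trivial
    obtain ⟨ys, hys, yn, hyn, rfl⟩ := Submodule.mem_sup.mp hy
    obtain ⟨xs, hxs⟩ := hsurjS ⟨ys, hys⟩
    have hxsval : φ (xs : V) - (xs : V) = ys := by
      have := congrArg Subtype.val hxs
      simpa [hψsval] using this
    refine ⟨(xs : V) - ∑ i ∈ range N, φ^[i] yn, ?_⟩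
    show φ ((xs : V) - ∑ i ∈ range N, φ^[i] yn) - ((xs : V) - ∑ i ∈ range N, φ^[i] yn)
      = ys + yn
    have hφsplit : φ ((xs : V) - ∑ i ∈ range N, φ^[i] yn)
        = φ (xs : V) - ∑ i ∈ range N, φ^[i+1] yn := by
      rw [← hΦval, map_sub, map_sum]
      congr 1
      refine Finset.sum_congr rfl fun i _ => ?_
      rw [hΦval]
      exact (Function.iterate_succ_apply' φ i yn).symm
    rw [hφsplit]
    have htel : (∑ i ∈ range N, φ^[i+1] yn) - (∑ i ∈ range N, φ^[i] yn)
        = φ^[N] yn - yn := by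
      rw [← Finset.sum_sub_distrib, Finset.sum_range_sub (fun i => φ^[i] yn)]
      simp
    have hNyn : φ^[N] yn = 0 := hN yn hyn
    calc φ (xs:V) - (∑ i ∈ range N, φ^[i+1] yn) - ((xs:V) - ∑ i ∈ range N, φ^[i] yn)
        = (φ (xs:V) - (xs:V))
          - ((∑ i ∈ range N, φ^[i+1] yn) - (∑ i ∈ range N, φ^[i] yn)) := by abel
      _ = ys - (φ^[N] yn - yn) := by rw [hxsval, htel]
      _ = ys + yn := by rw [hNyn]; abel
  · have heqv : {x : V // φ x = x} ≃ {y : Vss // ψs y = y} :=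
      { toFun := fun x => ⟨⟨x.1, hfixmem x.1 x.2⟩, Subtype.ext x.2⟩
        invFun := fun y => ⟨y.1.1, congrArg Subtype.val y.2⟩
        left_inv := fun x => rfl
        right_inv := fun y => rfl }
    rw [Nat.card_congr heqv, hcardS]
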